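/- arXiv:1701.01187 — 2 statements merged into one kernel-verified Lean document; each statement's English description precedes it below -/
import Mathlib

section
/- Let B be a finite group, let G be a non-abelian simple subgroup of B, and let N ≤ M be normal subgroups of B. Suppose that G ∩ N = 1, that every element of G commutes with every element of N (so GN = G × N), and that the conjugation action of G on M/N is trivial (equivalently, [G, M] ≤ N). Then G ∩ M = 1 and every element of G commutes with every element of M; that is, GM = G × M. -/
/-- The alternating group of degree `n`. -/
abbrev Alt (n : ℕ) : Type := ↥(alternatingGroup (Fin n))

/-- A group is non-abelian simple. -/
def IsNonabelianSimple (G : Type*) [Group G] : Prop :=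
  IsSimpleGroup G ∧ ∃ a b : G, a * b ≠ b * a

/-- `E` is a double cover of `G`: a perfect central extension of `G`
(i.e. a covering group of `G`) with `|E| = 2⋅|G|`. -/
def IsDoubleCover (E : Type*) (G : Type*) [Group E] [Group G] : Prop :=
  commutator E = ⊤ ∧ Nat.card E = 2 * Nat.card G ∧
    ∃ φ : E →* G, Function.Surjective φ ∧ φ.ker ≤ Subgroup.center E

theorem stmt13 {B : Type*} [Finite B] [Group B] (G N M : Subgroup B)
    (hGsimple : IsNonabelianSimple ↥G)
    (hNM : N ≤ M) (hN : N.Normal) (hM : M.Normal)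
    (hGN : G ⊓ N = ⊥)
    (hcomm : ∀ g ∈ G, ∀ n ∈ N, g * n = n * g)
    (htriv : ⁅G, M⁆ ≤ N) :
    G ⊓ M = ⊥ ∧ ∀ g ∈ G, ∀ m ∈ M, g * m = m * g := by
  obtain ⟨hsimp, a, b, hab⟩ := hGsimple
  -- G is perfect
  have hperf : commutator ↥G = ⊤ := by
    rcases hsimp.eq_bot_or_eq_top_of_normal (commutator ↥G) inferInstance with h | h
    · exfalso
      apply hab
      open scoped commutatorElement in
      have : ⁅a, b⁆ ∈ commutator ↥G := Subgroup.commutator_mem_commutator (Subgroup.mem_top a) (Subgroup.mem_top b)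
      rw [h, Subgroup.mem_bot, commutatorElement_eq_one_iff_mul_comm] at this
      exact this
    · exact h
  have hGG : ⁅G, G⁆ = G := by
    have := Subgroup.map_commutator (f := G.subtype) (H₁ := (⊤ : Subgroup ↥G)) (H₂ := ⊤)
    rw [← commutator_def, hperf] at this
    rw [← MonoidHom.range_eq_map, Subgroup.range_subtype] at this
    exact this.symm
  have hNG : ∀ K : Subgroup B, K ≤ N → ⁅K, G⁆ = ⊥ := by
    intro K hK
    rw [eq_bot_iff, Subgroup.commutator_le]
    intro n hn g hg
    rw [Subgroup.mem_bot, commutatorElement_eq_one_iff_mul_comm]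
    exact (hcomm g hg n (hK hn)).symm
  have key : ⁅G, M⁆ = ⊥ := by
    have h1 : ⁅⁅G, M⁆, G⁆ = ⊥ := hNG _ htriv
    have h2 : ⁅⁅M, G⁆, G⁆ = ⊥ := hNG _ (by rwa [Subgroup.commutator_comm])
    have := Subgroup.commutator_commutator_eq_bot_of_rotate h1 h2
    rwa [hGG] at this
  have hcm : ∀ g ∈ G, ∀ m ∈ M, g * m = m * g := by
    intro g hg m hm
    open scoped commutatorElement in
    have : ⁅g, m⁆ ∈ ⁅G, M⁆ := Subgroup.commutator_mem_commutator hg hm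
    rw [key, Subgroup.mem_bot, commutatorElement_eq_one_iff_mul_comm] at this
    exact this
  refine ⟨?_, hcm⟩
  have hMG : (M.subgroupOf G).Normal := hM.subgroupOf G
  rcases hsimp.eq_bot_or_eq_top_of_normal (M.subgroupOf G) hMG with h | h
  · rw [eq_bot_iff]
    intro x hx
    have : (⟨x, hx.1⟩ : ↥G) ∈ M.subgroupOf G := hx.2
    rw [h, Subgroup.mem_bot] at this
    simpa [Subgroup.mem_bot] using congrArg Subtype.val this
  · exfalso
    apply hab
    have ha : (a : B) ∈ M := by
      have : a ∈ M.subgroupOf G := h ▸ Subgroup.mem_top a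
      exact this
    ext
    exact hcm a.1 a.2 b.1 (by have : b ∈ M.subgroupOf G := h ▸ Subgroup.mem_top b; exact this)
end

section
/- Let G be a finite non-abelian simple group with G ≇ A₅, let Γ be a connected pentavalent symmetric G-vertex-transitive graph with G ≤ Aut(Γ) and G not normal in Aut(Γ), and let R be the radical of Aut(Γ) with R ≠ 1. Then R has at least three orbits on V(Γ). -/
open Equiv Pointwise

/-- The automorphism group of a simple graph `Γ`, realized as a subgroup of the
permutation group of the vertex set. -/
def SimpleGraph.autGroup {V : Type*} (Γ : SimpleGraph V) : Subgroup (Equiv.Perm V) where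
  carrier := { g | ∀ u v : V, Γ.Adj (g u) (g v) ↔ Γ.Adj u v }
  one_mem' := by intro u v; simp
  mul_mem' := by
    intro a b ha hb u v
    simp only [Set.mem_setOf_eq] at *
    rw [Equiv.Perm.mul_apply, Equiv.Perm.mul_apply, ha, hb]
  inv_mem' := by
    intro a ha u v
    simpa using (ha (a⁻¹ u) (a⁻¹ v)).symm

/-- A subgroup `G` of the permutation group of the vertices acts
vertex-transitively on `Γ`. -/
def SimpleGraph.IsVertexTransitive {V : Type*} (Γ : SimpleGraph V)
    (G : Subgroup (Equiv.Perm V)) : Prop :=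
  ∀ u v : V, ∃ g ∈ G, g u = v

/-- A subgroup `G` of the permutation group of the vertices acts transitively on
the arcs (ordered pairs of adjacent vertices) of `Γ`. -/
def SimpleGraph.IsArcTransitive {V : Type*} (Γ : SimpleGraph V)
    (G : Subgroup (Equiv.Perm V)) : Prop :=
  ∀ u₁ v₁ u₂ v₂ : V, Γ.Adj u₁ v₁ → Γ.Adj u₂ v₂ → ∃ g ∈ G, g u₁ = u₂ ∧ g v₁ = v₂

/-- A subgroup `G` of the permutation group of the vertices acts regularly on the
vertices of `Γ`. -/
def SimpleGraph.IsRegularSubgroup {V : Type*} (Γ : SimpleGraph V)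
    (G : Subgroup (Equiv.Perm V)) : Prop :=
  ∀ u v : V, ∃! g : G, (g : Equiv.Perm V) u = v

/-- `H` is a normal subgroup of the subgroup `K`. -/
def NormalIn {P : Type*} [Group P] (H K : Subgroup P) : Prop :=
  H ≤ K ∧ ∀ k ∈ K, ∀ h ∈ H, k * h * k⁻¹ ∈ H

/-- `R` is the radical (the largest solvable normal subgroup) of the subgroup `K`. -/
def IsRadicalOf {P : Type*} [Group P] (R K : Subgroup P) : Prop :=
  NormalIn R K ∧ IsSolvable ↥R ∧
    ∀ S : Subgroup P, NormalIn S K → IsSolvable ↥S → S ≤ R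

/-- The stabilizer of a vertex `v` in a subgroup `K` of the permutation group. -/
def vertexStab {V : Type*} (K : Subgroup (Equiv.Perm V)) (v : V) : Subgroup (Equiv.Perm V) :=
  K ⊓ MulAction.stabilizer (Equiv.Perm V) v

/-- The projective special linear group `PSL(2,8)`. -/
abbrev PSLTwoEight : Type :=
  Matrix.SpecialLinearGroup (Fin 2) (GaloisField 2 3) ⧸
    Subgroup.center (Matrix.SpecialLinearGroup (Fin 2) (GaloisField 2 3))

/-- The projective symplectic group `PSp(8,2)`. -/
abbrev PSpEightTwo : Type :=
  ↥(Matrix.symplecticGroup (Fin 4) (ZMod 2)) ⧸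
    Subgroup.center ↥(Matrix.symplecticGroup (Fin 4) (ZMod 2))

/-- The standard quadratic form of minus type in dimension `8` over the field
with two elements. -/
def quadFormMinus8 (x : Fin 8 → ZMod 2) : ZMod 2 :=
  x 0 * x 1 + x 2 * x 3 + x 4 * x 5 + (x 6 * x 6 + x 6 * x 7 + x 7 * x 7)

/-- The orthogonal group `O⁻₈(2)` of the minus-type quadratic form in dimension `8`
over the field with two elements. -/
def OMinusEightTwo : Subgroup (GL (Fin 8) (ZMod 2)) where
  carrier := { u | ∀ x : Fin 8 → ZMod 2,
    quadFormMinus8 ((u : Matrix (Fin 8) (Fin 8) (ZMod 2)).mulVec x) = quadFormMinus8 x }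
  one_mem' := by
    intro x
    simp [Matrix.one_mulVec]
  mul_mem' := by
    intro a b ha hb x
    simp only [Set.mem_setOf_eq] at *
    rw [Units.val_mul, ← Matrix.mulVec_mulVec, ha, hb]
  inv_mem' := by
    intro a ha x
    simp only [Set.mem_setOf_eq] at *
    have h := ha ((↑a⁻¹ : Matrix (Fin 8) (Fin 8) (ZMod 2)).mulVec x)
    rw [Matrix.mulVec_mulVec, ← Units.val_mul, mul_inv_cancel, Units.val_one,
      Matrix.one_mulVec] at h
    exact h.symm

/-- The simple orthogonal group `Ω⁻₈(2)`: the derived subgroup of `O⁻₈(2)`. -/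
abbrev OmegaMinusEightTwo : Type := ↥(commutator ↥OMinusEightTwo)

/-- `R` has at least three orbits on the vertex set. -/
def HasAtLeastThreeOrbits {V : Type*} (R : Subgroup (Equiv.Perm V)) : Prop :=
  ∃ v₁ v₂ v₃ : V,
    (∀ g ∈ R, g v₁ ≠ v₂) ∧ (∀ g ∈ R, g v₁ ≠ v₃) ∧ (∀ g ∈ R, g v₂ ≠ v₃)

/-- `R` and `G` generate an internal direct product `R × G`. -/
def IsInternalDirectProduct {P : Type*} [Group P] (R G : Subgroup P) : Prop :=
  R ⊓ G = ⊥ ∧ ∀ r ∈ R, ∀ g ∈ G, r * g = g * r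

open Equiv

/-- A simple group is at most as large as the factorial of the index of any proper subgroup. -/
theorem simple_card_le_factorial_index {X : Type*} [Group X] [Finite X] [IsSimpleGroup X]
    (P : Subgroup X) (hP : P ≠ ⊤) : Nat.card X ≤ (P.index).factorial := by
  classical
  letI := Fintype.ofFinite X
  letI := Fintype.ofFinite (X ⧸ P)
  have hker := Subgroup.normalCore_eq_ker P
  have hnc : P.normalCore.Normal := Subgroup.normalCore_normal P
  rcases hnc.eq_bot_or_eq_top with hbot | htop
  · have hinj : Function.Injective (MulAction.toPermHom X (X ⧸ P)) := by
      rw [← MonoidHom.ker_eq_bot_iff, ← hker, hbot]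
    have h1 : Nat.card X ≤ Nat.card (Perm (X ⧸ P)) :=
      Nat.card_le_card_of_injective _ hinj
    have h2 : Nat.card (Perm (X ⧸ P)) = (Nat.card (X ⧸ P)).factorial := by
      simp [Nat.card_eq_fintype_card, Fintype.card_perm]
    have h3 : P.index = Nat.card (X ⧸ P) := rfl
    rw [h3]; omega
  · exfalso
    exact hP (top_le_iff.mp (htop ▸ Subgroup.normalCore_le P))

/-- There is no nonabelian simple group of order dividing 60 and at most 12. -/
theorem no_small_nonabelian_simple {Q : Type*} [Group Q] [Finite Q] [IsSimpleGroup Q]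
    (hnc : ∃ a b : Q, a * b ≠ b * a) (hdvd : Nat.card Q ∣ 60) (hle : Nat.card Q ≤ 12) :
    False := by
  classical
  obtain ⟨a, b, hab⟩ := hnc
  letI := Fintype.ofFinite Q
  have hcp : 0 < Nat.card Q := Nat.card_pos
  -- helper to rule out orders with a prime-order subgroup of small index
  have key : ∀ p m : ℕ, Nat.Prime p → p * m = Nat.card Q → p ≠ Nat.card Q →
      Nat.card Q ≤ m.factorial := by
    intro p m hp hpm hpne
    have hpd : p ∣ Nat.card Q := Dvd.intro m hpm
    haveI : Fact p.Prime := ⟨hp⟩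
    obtain ⟨x, hx⟩ := exists_prime_orderOf_dvd_card p (by rw [← Nat.card_eq_fintype_card (α := Q)]; exact hpd)
    set P := Subgroup.zpowers x with hP
    have hcard : Nat.card P = p := by rw [Nat.card_zpowers, hx]
    have hPne : P ≠ ⊤ := by
      intro h
      rw [h] at hcard
      simp only [Subgroup.card_top] at hcard
      exact hpne hcard.symm
    have hmul : Nat.card P * P.index = Nat.card Q := Subgroup.card_mul_index P
    have hidx : P.index = m := by
      rw [hcard, ← hpm] at hmul
      exact Nat.eq_of_mul_eq_mul_left hp.pos hmul
    calc Nat.card Q ≤ (P.index).factorial := simple_card_le_factorial_index P hPne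
      _ = m.factorial := by rw [hidx]
  interval_cases hn : (Nat.card Q)
  -- 12 cases n = 1..12 (non-divisors killed by omega on hdvd)
  · -- n = 1
    haveI : Subsingleton Q := Nat.card_eq_one_iff_unique.mp hn |>.1
    exact hab (Subsingleton.elim _ _)
  · -- 2
    haveI : Fact (Nat.Prime 2) := ⟨Nat.prime_two⟩
    haveI := isCyclic_of_prime_card (p := 2) hn
    exact hab (IsCyclic.commGroup.mul_comm a b)
  · haveI : Fact (Nat.Prime 3) := ⟨by norm_num⟩
    haveI := isCyclic_of_prime_card (p := 3) hn
    exact hab (IsCyclic.commGroup.mul_comm a b)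
  · -- 4
    haveI : Fact (Nat.Prime 2) := ⟨Nat.prime_two⟩
    exact hab (IsPGroup.commutative_of_card_eq_prime_sq (p := 2) (by rw [hn]; norm_num) a b)
  · haveI : Fact (Nat.Prime 5) := ⟨by norm_num⟩
    haveI := isCyclic_of_prime_card (p := 5) hn
    exact hab (IsCyclic.commGroup.mul_comm a b)
  · -- 6
    have := key 3 2 (by norm_num) (by omega) (by omega)
    norm_num [Nat.factorial] at this
  · exact absurd hdvd (by omega)  -- 7
  · exact absurd hdvd (by omega)  -- 8
  · exact absurd hdvd (by omega)  -- 9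
  · -- 10
    have := key 5 2 (by norm_num) (by omega) (by omega)
    norm_num [Nat.factorial] at this
  · exact absurd hdvd (by omega)  -- 11
  · -- 12 : use a Sylow 2-subgroup, which has order 4 and index 3
    haveI : Fact (Nat.Prime 2) := ⟨Nat.prime_two⟩
    obtain ⟨P⟩ : Nonempty (Sylow 2 Q) := inferInstance
    have hcard : Nat.card P = 4 := by
      rw [Sylow.card_eq_multiplicity, hn]
      rw [Nat.factorization_def _ Nat.prime_two]
      have h12 : (12:ℕ) = 2^2 * 3 := by norm_num
      rw [h12, padicValNat.mul (by norm_num) (by norm_num), padicValNat.prime_pow,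
        padicValNat.eq_zero_of_not_dvd (by norm_num)]
      norm_num
    have hcard' : Nat.card (P : Subgroup Q) = 4 := hcard
    have hmul : Nat.card (P : Subgroup Q) * (P : Subgroup Q).index = Nat.card Q :=
      Subgroup.card_mul_index _
    have hidx : (P : Subgroup Q).index = 3 := by
      rw [hn, hcard'] at hmul
      omega
    have hPne : (P : Subgroup Q) ≠ ⊤ := by
      intro h
      have := hcard'
      rw [h] at this
      simp only [Subgroup.card_top] at this
      omega
    have := simple_card_le_factorial_index (P : Subgroup Q) hPne
    rw [hidx] at this
    rw [hn] at this
    norm_num [Nat.factorial] at this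

/-- The `MulEquiv` version of `Equiv.permCongr`. -/
def permMulCongr {α β : Type*} (e : α ≃ β) : Equiv.Perm α ≃* Equiv.Perm β where
  toEquiv := e.permCongr
  map_mul' σ τ := by
    ext x
    simp [Equiv.permCongr_apply]

/-- A nonabelian simple quotient of a subgroup of the permutation group on 5 letters
is isomorphic to `A₅`. -/
theorem quot_subgroup_perm_five {α : Type*} [Fintype α] [DecidableEq α]
    (h5 : Fintype.card α = 5) {Q : Type*} [Group Q] [IsSimpleGroup Q]
    (hnc : ∃ a b : Q, a * b ≠ b * a)
    (H : Subgroup (Equiv.Perm α)) (f : ↥H →* Q) (hf : Function.Surjective f) :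
    Nonempty (Q ≃* ↥(alternatingGroup (Fin 5))) := by
  classical
  obtain ⟨qa, qb, hq⟩ := hnc
  have hQnt : Nontrivial Q := by
    rcases subsingleton_or_nontrivial Q with h | h
    · exact absurd (Subsingleton.elim _ _) hq
    · exact h
  -- transport to `Fin 5`
  let e : α ≃ Fin 5 := Fintype.equivFinOfCardEq h5
  let μ : Equiv.Perm α ≃* Equiv.Perm (Fin 5) := permMulCongr e
  let H' : Subgroup (Equiv.Perm (Fin 5)) := H.map μ.toMonoidHom
  let i1 : ↥H ≃* ↥H' := Subgroup.equivMapOfInjective H μ.toMonoidHom μ.injective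
  let f' : ↥H' →* Q := f.comp i1.symm.toMonoidHom
  have hf' : Function.Surjective f' := hf.comp i1.symm.surjective
  -- the even part
  let sgn : ↥H' →* ℤˣ := Equiv.Perm.sign.comp H'.subtype
  let K : Subgroup ↥H' := sgn.ker
  have hKnormal : K.Normal := MonoidHom.normal_ker sgn
  have hmapK : (K.map f').Normal := hKnormal.map f' hf'
  rcases hmapK.eq_bot_or_eq_top with hbot | htop
  · -- the image of the even part is trivial: then Q is abelian, contradiction
    exfalso
    obtain ⟨a, ha⟩ := hf' qa
    obtain ⟨b, hb⟩ := hf' qb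
    have hcomm : a * b * a⁻¹ * b⁻¹ ∈ K := by
      have : sgn (a * b * a⁻¹ * b⁻¹) = 1 := by
        simp only [map_mul, map_inv]
        rw [mul_comm (sgn a) (sgn b)]
        group
      exact this
    have hmem : f' (a * b * a⁻¹ * b⁻¹) ∈ K.map f' := Subgroup.mem_map_of_mem f' hcomm
    rw [hbot, Subgroup.mem_bot] at hmem
    simp only [map_mul, map_inv, ha, hb] at hmem
    exact hq (by rw [← mul_inv_eq_one, mul_inv_rev, ← mul_assoc]; exact hmem)
  · -- the even part surjects onto Q
    have hKsurj : ∀ q : Q, ∃ k : ↥K, f' (K.subtype k) = q := by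
      intro q
      have : q ∈ Subgroup.map f' K := htop ▸ Subgroup.mem_top q
      obtain ⟨k, hk, hkq⟩ := this
      exact ⟨⟨k, hk⟩, hkq⟩
    -- push K down into Perm (Fin 5); it lies in the alternating group
    let K₀ : Subgroup (Equiv.Perm (Fin 5)) := K.map H'.subtype
    have hK₀A : K₀ ≤ alternatingGroup (Fin 5) := by
      rintro x ⟨k, hk, rfl⟩
      exact Equiv.Perm.mem_alternatingGroup.mpr hk
    let isoK : ↥K ≃* ↥K₀ := Subgroup.equivMapOfInjective K H'.subtype H'.subtype_injective
    let K₁ : Subgroup ↥(alternatingGroup (Fin 5)) := K₀.subgroupOf (alternatingGroup (Fin 5))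
    let iso₁ : ↥K₁ ≃* ↥K₀ := Subgroup.subgroupOfEquivOfLe hK₀A
    let F : ↥K₁ →* Q := (f'.comp K.subtype).comp ((isoK.symm.toMonoidHom).comp iso₁.toMonoidHom)
    have hFsurj : Function.Surjective F := by
      intro q
      obtain ⟨k, hk⟩ := hKsurj q
      refine ⟨iso₁.symm (isoK k), ?_⟩
      simp only [F, MonoidHom.comp_apply, MonoidHom.coe_comp, MulEquiv.coe_toMonoidHom,
        Function.comp_apply, MulEquiv.symm_apply_apply, MulEquiv.apply_symm_apply]
      exact hk
    by_cases hT : K₁ = ⊤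
    · -- K₁ is all of A₅ : Q is a quotient of the simple group A₅
      let F' : ↥(alternatingGroup (Fin 5)) →* Q :=
        F.comp (((MulEquiv.subgroupCongr hT).symm.toMonoidHom).comp
          Subgroup.topEquiv.symm.toMonoidHom)
      have hF'surj : Function.Surjective F' := by
        intro q
        obtain ⟨x, hx⟩ := hFsurj q
        refine ⟨Subgroup.topEquiv ((MulEquiv.subgroupCongr hT) x), ?_⟩
        simp only [F', MonoidHom.comp_apply, MulEquiv.coe_toMonoidHom,
          MulEquiv.symm_apply_apply]
        exact hx
      haveI : IsSimpleGroup ↥(alternatingGroup (Fin 5)) := alternatingGroup.isSimpleGroup_five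
      rcases (MonoidHom.normal_ker F').eq_bot_or_eq_top with hker | hker
      · have hinj : Function.Injective F' := (MonoidHom.ker_eq_bot_iff F').mp hker
        exact ⟨(MulEquiv.ofBijective F' ⟨hinj, hF'surj⟩).symm⟩
      · exfalso
        apply hq
        obtain ⟨x, hx⟩ := hF'surj qa
        obtain ⟨y, hy⟩ := hF'surj qb
        have hx1 : F' x = 1 := by
          have : x ∈ F'.ker := hker ▸ Subgroup.mem_top x
          exact this
        have hy1 : F' y = 1 := by
          have : y ∈ F'.ker := hker ▸ Subgroup.mem_top y
          exact this
        rw [← hx, ← hy, hx1, hy1, mul_one]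
    · -- K₁ is proper in A₅ : its cardinality is at most 12, contradiction
      exfalso
      haveI : IsSimpleGroup ↥(alternatingGroup (Fin 5)) := alternatingGroup.isSimpleGroup_five
      have hcard60 : Nat.card ↥(alternatingGroup (Fin 5)) = 60 := by
        have h2 : 2 * Fintype.card ↥(alternatingGroup (Fin 5))
            = Fintype.card (Equiv.Perm (Fin 5)) := two_mul_card_alternatingGroup
        rw [Fintype.card_perm, Fintype.card_fin] at h2
        have h3 : Nat.factorial 5 = 120 := rfl
        rw [h3] at h2
        rw [Nat.card_eq_fintype_card]
        omega
      have hfac : Nat.card ↥(alternatingGroup (Fin 5)) ≤ (K₁.index).factorial :=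
        simple_card_le_factorial_index K₁ hT
      rw [hcard60] at hfac
      have hidxne : K₁.index ≠ 0 := Subgroup.index_ne_zero_of_finite
      have hidx5 : 5 ≤ K₁.index := by
        by_contra hlt
        push_neg at hlt
        interval_cases h : K₁.index <;> norm_num [Nat.factorial] at hfac
      have hmul : Nat.card ↥K₁ * K₁.index = 60 := by
        rw [← hcard60]; exact Subgroup.card_mul_index K₁
      have hK₁le : Nat.card ↥K₁ ≤ 12 := by nlinarith
      have hK₁dvd : Nat.card ↥K₁ ∣ 60 := Dvd.intro _ hmul
      have hQdvd : Nat.card Q ∣ Nat.card ↥K₁ := Subgroup.card_dvd_of_surjective F hFsurj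
      have hK₁pos : 0 < Nat.card ↥K₁ := Nat.card_pos
      have hQle : Nat.card Q ≤ 12 := le_trans (Nat.le_of_dvd hK₁pos hQdvd) hK₁le
      have hQdvd60 : Nat.card Q ∣ 60 := dvd_trans hQdvd hK₁dvd
      have hQpos : Nat.card Q ≠ 0 := by
        intro h0
        rw [h0] at hQdvd
        exact hK₁pos.ne' (Nat.eq_zero_of_zero_dvd hQdvd)
      haveI : Finite Q := Nat.finite_of_card_ne_zero hQpos
      exact no_small_nonabelian_simple ⟨qa, qb, hq⟩ hQdvd60 hQle

theorem stmt15_aux {V : Type*} [Fintype V] (Γ : SimpleGraph V) [DecidableRel Γ.Adj]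
    (hconn : Γ.Connected) (hpent : Γ.IsRegularOfDegree 5)
    (G : Subgroup (Equiv.Perm V)) (hGle : G ≤ Γ.autGroup)
    (hGsimple : IsNonabelianSimple ↥G)
    (hGA5 : ¬ Nonempty (↥G ≃* ↥(alternatingGroup (Fin 5))))
    (hGtrans : Γ.IsVertexTransitive G)
    (R : Subgroup (Equiv.Perm V)) (hRle : R ≤ Γ.autGroup)
    (hRconj : ∀ k ∈ Γ.autGroup, ∀ h ∈ R, k * h * k⁻¹ ∈ R)
    (hRsolv : IsSolvable ↥R) :
    HasAtLeastThreeOrbits R := by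
  classical
  haveI hGS : IsSimpleGroup ↥G := hGsimple.1
  obtain ⟨ga, gb, hgab⟩ := hGsimple.2
  haveI : Nontrivial ↥G := ⟨ga * gb, gb * ga, hgab⟩
  by_contra hcon
  -- the `R`-orbit relation
  let rel : V → V → Prop := fun a b => ∃ g ∈ R, g a = b
  have hrefl : ∀ w, rel w w := fun w => ⟨1, R.one_mem, rfl⟩
  have hsymm : ∀ {x y}, rel x y → rel y x := by
    rintro x y ⟨g, hg, rfl⟩
    exact ⟨g⁻¹, R.inv_mem hg, Equiv.symm_apply_apply g x⟩
  have htrans : ∀ {x y z}, rel x y → rel y z → rel x z := by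
    rintro x y z ⟨g, hg, rfl⟩ ⟨h, hh, rfl⟩
    exact ⟨h * g, R.mul_mem hh hg, Equiv.Perm.mul_apply h g x⟩
  have htriple : ∀ p q r : V, rel p q ∨ rel p r ∨ rel q r := by
    intro p q r
    by_contra hh
    push_neg at hh
    obtain ⟨h1, h2, h3⟩ := hh
    exact hcon ⟨p, q, r,
      fun g hg he => h1 ⟨g, hg, he⟩,
      fun g hg he => h2 ⟨g, hg, he⟩,
      fun g hg he => h3 ⟨g, hg, he⟩⟩
  -- elements of the automorphism group preserve the orbit relation
  have hpres : ∀ (x : Equiv.Perm V), x ∈ Γ.autGroup → ∀ c d : V, rel c d → rel (x c) (x d) := by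
    rintro x hx c d ⟨g, hg, rfl⟩
    refine ⟨x * g * x⁻¹, hRconj x hx g hg, ?_⟩
    simp [Equiv.Perm.mul_apply]
  have hGpres : ∀ (x : ↥G) (c d : V), rel c d →
      rel ((x : Equiv.Perm V) c) ((x : Equiv.Perm V) d) :=
    fun x c d h => hpres _ (hGle x.2) c d h
  have mulapp : ∀ (x y : ↥G) (w : V),
      ((x * y : ↥G) : Equiv.Perm V) w = (x : Equiv.Perm V) ((y : Equiv.Perm V) w) := by
    intro x y w
    simp [Equiv.Perm.mul_apply]
  by_cases htrans1 : ∀ c d : V, rel c d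
  · -- `R` is transitive : `G` is isomorphic to a quotient of a vertex stabilizer,
    -- hence (by the local analysis) to `A₅`, a contradiction.
    obtain ⟨v₀⟩ : Nonempty V := hconn.nonempty
    -- the quotient of the automorphism group by (the copy of) `R`
    let W : Subgroup (Equiv.Perm V) := Γ.autGroup
    let R' : Subgroup ↥W := R.subgroupOf W
    haveI hR'normal : R'.Normal := by
      constructor
      intro n hn g
      rw [Subgroup.mem_subgroupOf] at hn ⊢
      have := hRconj (g : Equiv.Perm V) g.2 (n : Equiv.Perm V) hn
      simpa using this
    let Qt := ↥W ⧸ R'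
    let π : ↥W →* Qt := QuotientGroup.mk' R'
    have hπR : ∀ x : ↥W, (x : Equiv.Perm V) ∈ R → π x = 1 := by
      intro x hx
      rw [QuotientGroup.mk'_apply, QuotientGroup.eq_one_iff]
      exact (Subgroup.mem_subgroupOf).mpr hx
    let ψ : ↥G →* Qt := π.comp (Subgroup.inclusion hGle)
    -- ψ is injective since `G` is simple and not solvable
    have hψinj : Function.Injective ψ := by
      rw [← MonoidHom.ker_eq_bot_iff]
      rcases (MonoidHom.normal_ker ψ).eq_bot_or_eq_top with h | h
      · exact h
      · exfalso
        have hGR : G ≤ R := by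
          intro g hg
          have : (⟨g, hg⟩ : ↥G) ∈ ψ.ker := h ▸ Subgroup.mem_top _
          rw [MonoidHom.mem_ker] at this
          have h2 : (Subgroup.inclusion hGle ⟨g, hg⟩ : ↥W) ∈ R' := by
            rwa [← QuotientGroup.eq_one_iff (N := R'),
              ← QuotientGroup.mk'_apply]
          rw [Subgroup.mem_subgroupOf] at h2
          exact h2
        haveI : Group.IsSolvable ↥R := hRsolv
        haveI : Group.IsSolvable ↥(G.subgroupOf R) := inferInstance
        have hsolvG : IsSolvable ↥G :=
          solvable_of_surjective (f := (Subgroup.subgroupOfEquivOfLe hGR).toMonoidHom)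
            (Subgroup.subgroupOfEquivOfLe hGR).surjective
        exact hgab (IsSimpleGroup.comm_iff_isSolvable.mpr hsolvG ga gb)
    let GQ : Subgroup Qt := ψ.range
    let eGQ : ↥G ≃* ↥GQ := MonoidHom.ofInjective hψinj
    haveI : Nontrivial ↥GQ := eGQ.symm.toEquiv.nontrivial
    haveI hGQsimple : IsSimpleGroup ↥GQ :=
      IsSimpleGroup.isSimpleGroup_of_surjective eGQ.toMonoidHom eGQ.surjective
    have hGQnc : (eGQ ga) * (eGQ gb) ≠ (eGQ gb) * (eGQ ga) := by
      intro h
      rw [← map_mul, ← map_mul] at h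
      exact hgab (eGQ.injective h)
    -- the descending chain of fixators
    let D : Finset V → Subgroup ↥W := fun S =>
      { carrier := {g : ↥W | π g ∈ GQ ∧ (g : Equiv.Perm V) v₀ = v₀ ∧
          ∀ s ∈ S, ∀ x : V, Γ.Adj s x → (g : Equiv.Perm V) x = x}
        one_mem' := ⟨by rw [map_one]; exact GQ.one_mem, rfl, fun s _ x _ => rfl⟩
        mul_mem' := by
          rintro p q ⟨hp1, hp2, hp3⟩ ⟨hq1, hq2, hq3⟩
          refine ⟨by rw [map_mul]; exact GQ.mul_mem hp1 hq1, ?_, ?_⟩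
          · show (p : Equiv.Perm V) ((q : Equiv.Perm V) v₀) = v₀
            rw [hq2, hp2]
          · intro s hs x hx
            show (p : Equiv.Perm V) ((q : Equiv.Perm V) x) = x
            rw [hq3 s hs x hx, hp3 s hs x hx]
        inv_mem' := by
          rintro p ⟨hp1, hp2, hp3⟩
          refine ⟨by rw [map_inv]; exact GQ.inv_mem hp1, ?_, ?_⟩
          · show ((p : Equiv.Perm V))⁻¹ v₀ = v₀
            conv_lhs => rw [← hp2]
            exact Equiv.symm_apply_apply _ _
          · intro s hs x hx
            show ((p : Equiv.Perm V))⁻¹ x = x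
            conv_lhs => rw [← hp3 s hs x hx]
            exact Equiv.symm_apply_apply _ _ }
    have hmemD : ∀ (S : Finset V) (g : ↥W), g ∈ D S ↔ (π g ∈ GQ ∧ (g : Equiv.Perm V) v₀ = v₀ ∧
        ∀ s ∈ S, ∀ x : V, Γ.Adj s x → (g : Equiv.Perm V) x = x) := fun _ _ => Iff.rfl
    -- a walk-based fact : any vertex other than `v₀` has a neighbour closer to `v₀`
    have hparent : ∀ x : V, x ≠ v₀ → ∃ p : V, Γ.Adj p x ∧ Γ.dist v₀ p < Γ.dist v₀ x := by
      intro x hx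
      have hdp : 0 < Γ.dist v₀ x := hconn.pos_dist_of_ne (Ne.symm hx)
      obtain ⟨w, hwlen⟩ := hconn.exists_walk_length_eq_dist v₀ x
      obtain ⟨p, hadj, q, hq⟩ := SimpleGraph.Walk.exists_eq_cons_of_ne hx w.reverse
      have hql : q.length + 1 = Γ.dist v₀ x := by
        have := congrArg SimpleGraph.Walk.length hq
        rw [SimpleGraph.Walk.length_reverse, hwlen] at this
        rw [SimpleGraph.Walk.length_cons] at this
        omega
      have hdistp : Γ.dist v₀ p ≤ q.length := by
        have := SimpleGraph.dist_le q.reverse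
        rwa [SimpleGraph.Walk.length_reverse] at this
      exact ⟨p, hadj.symm, by omega⟩
    -- the descent
    have descent : ∀ (n : ℕ) (S : Finset V), (Finset.univ \ S).card = n →
        ∀ (f : ↥(D S) →* ↥GQ), Function.Surjective f →
          Nonempty (↥GQ ≃* ↥(alternatingGroup (Fin 5))) := by
      intro n
      induction n with
      | zero =>
        intro S hS f hfsurj
        exfalso
        have hSuniv : ∀ x : V, x ∈ S := by
          intro x
          by_contra hx
          have hmem : x ∈ Finset.univ \ S := Finset.mem_sdiff.mpr ⟨Finset.mem_univ x, hx⟩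
          rw [Finset.card_eq_zero] at hS
          rw [hS] at hmem
          exact absurd hmem (Finset.notMem_empty x)
        have hDbot : D S = ⊥ := by
          rw [eq_bot_iff]
          intro g hg
          rw [Subgroup.mem_bot]
          rw [hmemD] at hg
          have : (g : Equiv.Perm V) = 1 := by
            ext x
            by_cases hx : x = v₀
            · rw [hx]; exact hg.2.1
            · obtain ⟨p, hadj, _⟩ := hparent x hx
              exact hg.2.2 p (hSuniv p) x hadj
          exact Subtype.ext this
        obtain ⟨q1, q2, hq12⟩ := exists_pair_ne ↥GQ
        obtain ⟨x1, hx1⟩ := hfsurj q1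
        obtain ⟨x2, hx2⟩ := hfsurj q2
        haveI : Subsingleton ↥(D S) := by rw [hDbot]; infer_instance
        rw [Subsingleton.elim x1 x2] at hx1
        exact hq12 (hx1 ▸ hx2 ▸ rfl)
      | succ n ih =>
        intro S hS f hfsurj
        have hne : (Finset.univ \ S).Nonempty := Finset.card_pos.mp (by omega)
        obtain ⟨u, hu, hmin⟩ := Finset.exists_min_image (Finset.univ \ S)
          (fun y => Γ.dist v₀ y) hne
        have huS : u ∉ S := (Finset.mem_sdiff.mp hu).2
        -- all elements of `D S` fix `u`
        have hfixu : ∀ g : ↥W, g ∈ D S → (g : Equiv.Perm V) u = u := by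
          intro g hg
          rw [hmemD] at hg
          by_cases huv : u = v₀
          · rw [huv]; exact hg.2.1
          · obtain ⟨p, hadj, hdp⟩ := hparent u huv
            have hpS : p ∈ S := by
              by_contra hp
              have hmem : p ∈ Finset.univ \ S := Finset.mem_sdiff.mpr ⟨Finset.mem_univ p, hp⟩
              have := hmin p hmem
              omega
            exact hg.2.2 p hpS u hadj
        -- the restriction of `D S` to the neighbourhood of `u`
        have hnbr : ∀ (g : ↥(D S)) (x : V), x ∈ Γ.neighborSet u ↔
            ((g : ↥W) : Equiv.Perm V) x ∈ Γ.neighborSet u := by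
          intro g x
          have haut := (g : ↥W).2
          have h1 : Γ.Adj (((g : ↥W) : Equiv.Perm V) u) (((g : ↥W) : Equiv.Perm V) x) ↔
              Γ.Adj u x := haut u x
          rw [hfixu _ g.2] at h1
          exact (SimpleGraph.mem_neighborSet _ _ _).trans
            ((SimpleGraph.mem_neighborSet _ _ _).symm.trans h1.symm)
        let ρ : ↥(D S) →* Equiv.Perm ↥(Γ.neighborSet u) :=
          { toFun := fun g => Equiv.Perm.subtypePerm ((g : ↥W) : Equiv.Perm V) (fun x => (hnbr g x).symm)
            map_one' := by
              ext x
              simp [Equiv.Perm.subtypePerm_apply]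
            map_mul' := by
              intro p q
              ext x
              simp [Equiv.Perm.subtypePerm_apply, Equiv.Perm.mul_apply]
              rfl }
        have hkerρ : ∀ g : ↥(D S), g ∈ ρ.ker ↔
            ∀ x : V, Γ.Adj u x → ((g : ↥W) : Equiv.Perm V) x = x := by
          intro g
          rw [MonoidHom.mem_ker]
          constructor
          · intro h x hx
            have := congrArg (fun (σ : Equiv.Perm ↥(Γ.neighborSet u)) => (σ ⟨x, hx⟩ : V)) h
            simpa [ρ, Equiv.Perm.subtypePerm_apply] using this
          · intro h
            ext x
            simp [ρ, Equiv.Perm.subtypePerm_apply, h x.1 x.2]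
        haveI : (ρ.ker).Normal := MonoidHom.normal_ker ρ
        have hmapnormal : ((ρ.ker).map f).Normal := (MonoidHom.normal_ker ρ).map f hfsurj
        rcases hmapnormal.eq_bot_or_eq_top with hbot | htop
        · -- `GQ` is a quotient of a subgroup of `S₅`
          have hNle : ρ.ker ≤ f.ker := by
            intro x hx
            have : f x ∈ (ρ.ker).map f := Subgroup.mem_map_of_mem f hx
            rw [hbot, Subgroup.mem_bot] at this
            exact MonoidHom.mem_ker.mpr this
          let fbar : (↥(D S) ⧸ ρ.ker) →* ↥GQ :=
            QuotientGroup.lift ρ.ker f (fun x hx => MonoidHom.mem_ker.mp (hNle hx))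
          have hfbarsurj : Function.Surjective fbar := by
            intro q
            obtain ⟨x, hx⟩ := hfsurj q
            exact ⟨QuotientGroup.mk x, hx⟩
          let iso1 : (↥(D S) ⧸ ρ.ker) ≃* ↥ρ.range := QuotientGroup.quotientKerEquivRange ρ
          let F : ↥ρ.range →* ↥GQ := fbar.comp iso1.symm.toMonoidHom
          have hFsurj : Function.Surjective F := hfbarsurj.comp iso1.symm.surjective
          haveI : DecidableEq ↥(Γ.neighborSet u) := Classical.decEq _
          have hcard5 : Fintype.card ↥(Γ.neighborSet u) = 5 := by
            rw [Γ.card_neighborSet_eq_degree]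
            exact hpent u
          exact quot_subgroup_perm_five hcard5 ⟨eGQ ga, eGQ gb, hGQnc⟩ ρ.range F hFsurj
        · -- recurse with `insert u S`
          have hle2 : D (insert u S) ≤ D S := by
            intro g hg
            rw [hmemD] at hg ⊢
            exact ⟨hg.1, hg.2.1, fun s hs x hx => hg.2.2 s (Finset.mem_insert_of_mem hs) x hx⟩
          let f' : ↥(D (insert u S)) →* ↥GQ := f.comp (Subgroup.inclusion hle2)
          have hf'surj : Function.Surjective f' := by
            intro q
            have hq : q ∈ (ρ.ker).map f := htop ▸ Subgroup.mem_top q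
            obtain ⟨x, hxker, hfx⟩ := hq
            have hxmem : (x : ↥W) ∈ D (insert u S) := by
              rw [hmemD]
              have hxD := x.2
              rw [hmemD] at hxD
              refine ⟨hxD.1, hxD.2.1, ?_⟩
              intro s hs y hy
              rcases Finset.mem_insert.mp hs with hsu | hsS
              · rw [hsu] at hy
                exact (hkerρ x).mp hxker y hy
              · exact hxD.2.2 s hsS y hy
            refine ⟨⟨(x : ↥W), hxmem⟩, ?_⟩
            have : Subgroup.inclusion hle2 ⟨(x : ↥W), hxmem⟩ = x := Subtype.ext rfl
            rw [MonoidHom.comp_apply, this]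
            exact hfx
          have hcard : (Finset.univ \ insert u S).card = n := by
            have heq : Finset.univ \ insert u S = (Finset.univ \ S).erase u := by
              ext y
              simp only [Finset.mem_sdiff, Finset.mem_univ, Finset.mem_insert,
                Finset.mem_erase, true_and]
              tauto
            rw [heq, Finset.card_erase_of_mem hu, hS]
            omega
          exact ih (insert u S) hcard f' hf'surj
    -- the starting surjection `D ∅ → GQ`
    let f₀ : ↥(D ∅) →* ↥GQ :=
      { toFun := fun g => ⟨π (g : ↥W), ((hmemD ∅ (g : ↥W)).mp g.2).1⟩
        map_one' := by
          ext
          simp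
        map_mul' := by
          intro p q
          ext
          simp }
    have hf₀surj : Function.Surjective f₀ := by
      intro q
      obtain ⟨g₀, hg₀⟩ := q.2
      set x : ↥W := Subgroup.inclusion hGle g₀ with hxdef
      obtain ⟨r, hrR, hr⟩ := htrans1 ((x : Equiv.Perm V) v₀) v₀
      let rw' : ↥W := ⟨r, hRle hrR⟩
      have hs1 : ((rw' * x : ↥W) : Equiv.Perm V) v₀ = v₀ := by
        rw [Subgroup.coe_mul, Equiv.Perm.mul_apply]
        exact hr
      have hs2 : π (rw' * x) = π x := by
        rw [map_mul, hπR rw' hrR, one_mul]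
      have hs3 : π (rw' * x) ∈ GQ := by
        rw [hs2]
        exact ⟨g₀, rfl⟩
      have hsD : (rw' * x : ↥W) ∈ D ∅ := by
        rw [hmemD]
        exact ⟨hs3, hs1, fun s hs => absurd hs (Finset.notMem_empty s)⟩
      refine ⟨⟨rw' * x, hsD⟩, ?_⟩
      apply Subtype.ext
      show π (rw' * x) = (q : Qt)
      rw [hs2]
      exact hg₀
    obtain ⟨iso⟩ := descent (Finset.univ \ ∅).card ∅ rfl f₀ hf₀surj
    exact hGA5 ⟨eGQ.trans iso⟩
  · -- `R` has exactly two orbits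
    push_neg at htrans1
    obtain ⟨a, b, hab⟩ := htrans1
    have hclass : ∀ w, rel a w ∨ rel b w := by
      intro w
      rcases htriple a b w with h | h | h
      · exact absurd h hab
      · exact Or.inl h
      · exact Or.inr h
    -- Boolean class function
    let cb : V → Bool := fun w => if rel a w then true else false
    have hval : ∀ w, (rel a w ∧ cb w = true) ∨ (rel b w ∧ ¬ rel a w ∧ cb w = false) := by
      intro w
      rcases hclass w with hw | hw
      · exact Or.inl ⟨hw, by simp [cb, hw]⟩
      · by_cases haw : rel a w
        · exact Or.inl ⟨haw, by simp [cb, haw]⟩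
        · exact Or.inr ⟨hw, haw, by simp [cb, haw]⟩
    have hcb_iff : ∀ w w', (cb w = cb w') ↔ rel w w' := by
      intro w w'
      constructor
      · intro h
        rcases hval w with ⟨hw, hc⟩ | ⟨hw, _, hc⟩ <;>
          rcases hval w' with ⟨hw', hc'⟩ | ⟨hw', _, hc'⟩
        · exact htrans (hsymm hw) hw'
        · rw [hc, hc'] at h; exact Bool.noConfusion h
        · rw [hc, hc'] at h; exact Bool.noConfusion h
        · exact htrans (hsymm hw) hw'
      · intro h
        rcases hval w with ⟨hw, hc⟩ | ⟨hw, hna, hc⟩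
        · have hw' : rel a w' := htrans hw h
          rw [hc]
          rcases hval w' with ⟨_, hc'⟩ | ⟨_, hna', _⟩
          · rw [hc']
          · exact absurd hw' hna'
        · have hbw' : rel b w' := htrans hw h
          have hna' : ¬ rel a w' := fun haw' => hab (htrans haw' (hsymm hbw'))
          rw [hc]
          rcases hval w' with ⟨haw', _⟩ | ⟨_, _, hc'⟩
          · exact absurd haw' hna'
          · rw [hc']
    -- each element of `G` acts on the two classes via an `xor`
    let bx : ↥G → Bool := fun x => xor (cb ((x : Equiv.Perm V) a)) (cb a)
    have keyfact : ∀ (x : ↥G) (w : V),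
        cb ((x : Equiv.Perm V) w) = xor (bx x) (cb w) := by
      intro x w
      rcases hclass w with hw | hw
      · have h1 : cb ((x : Equiv.Perm V) a) = cb ((x : Equiv.Perm V) w) :=
          (hcb_iff _ _).mpr (hGpres x a w hw)
        have h2 : cb a = cb w := (hcb_iff _ _).mpr hw
        rw [← h1, ← h2]
        cases hxa : cb ((x : Equiv.Perm V) a) <;> cases haa : cb a <;> simp [bx, hxa, haa]
      · have h1 : cb ((x : Equiv.Perm V) b) = cb ((x : Equiv.Perm V) w) :=
          (hcb_iff _ _).mpr (hGpres x b w hw)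
        have h2 : cb b = cb w := (hcb_iff _ _).mpr hw
        have hne1 : cb ((x : Equiv.Perm V) a) ≠ cb ((x : Equiv.Perm V) b) := by
          intro heq
          have hxx : rel ((x : Equiv.Perm V) a) ((x : Equiv.Perm V) b) := (hcb_iff _ _).mp heq
          have h3 := hpres _ (Γ.autGroup.inv_mem (hGle x.2)) _ _ hxx
          simp only [Equiv.Perm.inv_def, Equiv.symm_apply_apply] at h3
          exact hab h3
        have hne2 : cb a ≠ cb b := fun heq => hab ((hcb_iff _ _).mp heq)
        rw [← h1, ← h2]
        revert hne1 hne2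
        cases hxa : cb ((x : Equiv.Perm V) a) <;> cases hxb : cb ((x : Equiv.Perm V) b) <;>
          cases haa : cb a <;> cases hbb : cb b <;> simp [bx, hxa, haa]
    have hbinv : ∀ x : ↥G, bx x⁻¹ = bx x := by
      intro x
      have h1 := keyfact x (((x⁻¹ : ↥G) : Equiv.Perm V) a)
      have h2 := keyfact x⁻¹ a
      have h3 : (x : Equiv.Perm V) (((x⁻¹ : ↥G) : Equiv.Perm V) a) = a := by
        rw [← mulapp]
        simp
      rw [h3, h2] at h1
      revert h1
      cases hbx : bx x <;> cases hbx' : bx x⁻¹ <;> cases hca : cb a <;> simp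
    -- the commutator of `ga` and `gb` preserves each class
    have hcw : ∀ w, cb (((ga * gb * ga⁻¹ * gb⁻¹ : ↥G) : Equiv.Perm V) w) = cb w := by
      intro w
      rw [mulapp (ga * gb * ga⁻¹) gb⁻¹, mulapp (ga * gb) ga⁻¹, mulapp ga gb]
      rw [keyfact ga, keyfact gb, keyfact ga⁻¹, keyfact gb⁻¹, hbinv, hbinv]
      cases bx ga <;> cases bx gb <;> cases cb w <;> rfl
    -- the subgroup of `G` preserving each class
    let K' : Subgroup ↥G :=
      { carrier := {x : ↥G | ∀ w, rel ((x : Equiv.Perm V) w) w}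
        one_mem' := by
          intro w
          simpa using hrefl w
        mul_mem' := by
          intro p q hp hq w
          rw [mulapp]
          exact htrans (hp ((q : Equiv.Perm V) w)) (hq w)
        inv_mem' := by
          intro p hp w
          have h1 := hp (((p⁻¹ : ↥G) : Equiv.Perm V) w)
          have h3 : (p : Equiv.Perm V) (((p⁻¹ : ↥G) : Equiv.Perm V) w) = w := by
            rw [← mulapp]; simp
          rw [h3] at h1
          exact hsymm h1 }
    have hK'mem : ∀ x : ↥G, x ∈ K' ↔ ∀ w, rel ((x : Equiv.Perm V) w) w := fun _ => Iff.rfl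
    have hK'normal : K'.Normal := by
      constructor
      intro n hn g
      rw [hK'mem]
      intro w
      rw [mulapp, mulapp]
      have h1 := hn (((g⁻¹ : ↥G) : Equiv.Perm V) w)
      have h2 := hGpres g _ _ h1
      have h3 : (g : Equiv.Perm V) (((g⁻¹ : ↥G) : Equiv.Perm V) w) = w := by
        rw [← mulapp]; simp
      rw [h3] at h2
      exact h2
    rcases hK'normal.eq_bot_or_eq_top with hbot | htop
    · have hcK : (ga * gb * ga⁻¹ * gb⁻¹ : ↥G) ∈ K' := by
        rw [hK'mem]
        intro w
        exact (hcb_iff _ _).mp (hcw w)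
      rw [hbot, Subgroup.mem_bot] at hcK
      exact hgab (by rw [← mul_inv_eq_one, mul_inv_rev, ← mul_assoc]; exact hcK)
    · obtain ⟨g, hgG, hga⟩ := hGtrans a b
      have : (⟨g, hgG⟩ : ↥G) ∈ K' := htop ▸ Subgroup.mem_top _
      rw [hK'mem] at this
      have h1 := this a
      simp only [hga] at h1
      exact hab (hsymm h1)

theorem stmt15 {V : Type*} [Fintype V] (Γ : SimpleGraph V) [DecidableRel Γ.Adj]
    (hconn : Γ.Connected) (hpent : Γ.IsRegularOfDegree 5)
    (hsym : Γ.IsArcTransitive Γ.autGroup)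
    (G : Subgroup (Equiv.Perm V)) (hGle : G ≤ Γ.autGroup)
    (hGsimple : IsNonabelianSimple ↥G)
    (hGA5 : ¬ Nonempty (↥G ≃* Alt 5))
    (hGtrans : Γ.IsVertexTransitive G)
    (hGnn : ¬ NormalIn G Γ.autGroup)
    (R : Subgroup (Equiv.Perm V)) (hR : IsRadicalOf R Γ.autGroup) (hRne : R ≠ ⊥) :
    HasAtLeastThreeOrbits R :=
  stmt15_aux Γ hconn hpent G hGle hGsimple hGA5 hGtrans R hR.1.1 hR.1.2 hR.2.1
end
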